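/- Fix α > 0, real parameters β, δ, and ν ∈ (0,1), and set λ₂(i) = δ + β(1 − ν^i) and p_i = e^{−α} α^i / i!. Then ∑_{i=0}^∞ i·λ₂(i) p_i − α ∑_{i=0}^∞ λ₂(i) p_i = α β (1 − ν) e^{α(ν−1)}. In particular, in the exponential pseudo-Poisson model Cov(X₁, X₂) = α β (1 − ν) e^{α(ν−1)}, whose sign equals the sign of β. -/

import Mathlib

open Real

lemma expPP_exp_tsum (x : ℝ) : ∑' i : ℕ, x ^ i / (Nat.factorial i) = Real.exp x := by
  rw [Real.exp_eq_exp_ℝ, NormedSpace.exp_eq_tsum ℝ]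
  exact tsum_congr fun n => by rw [smul_eq_mul]; field_simp

lemma expPP_summable (x : ℝ) : Summable (fun i : ℕ => x ^ i / (Nat.factorial i)) :=
  Real.summable_pow_div_factorial x

lemma expPP_shift (x : ℝ) (n : ℕ) :
    ((n + 1 : ℕ) : ℝ) * x ^ (n + 1) / (Nat.factorial (n + 1)) = x * (x ^ n / Nat.factorial n) := by
  rw [Nat.factorial_succ, pow_succ]
  push_cast
  have h1 : (Nat.factorial n : ℝ) ≠ 0 := Nat.cast_ne_zero.mpr (Nat.factorial_ne_zero n)
  field_simp

lemma expPP_summable' (x : ℝ) : Summable (fun i : ℕ => (i : ℝ) * x ^ i / (Nat.factorial i)) := by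
  rw [← summable_nat_add_iff 1]
  have : (fun n : ℕ => ((n + 1 : ℕ) : ℝ) * x ^ (n + 1) / (Nat.factorial (n + 1)))
      = fun n : ℕ => x * (x ^ n / Nat.factorial n) := funext fun n => expPP_shift x n
  rw [this]
  exact (expPP_summable x).mul_left x

lemma expPP_exp_tsum' (x : ℝ) :
    ∑' i : ℕ, (i : ℝ) * x ^ i / (Nat.factorial i) = x * Real.exp x := by
  rw [Summable.tsum_eq_zero_add (expPP_summable' x)]
  simp only [Nat.cast_zero, zero_mul, zero_div, zero_add, expPP_shift]
  rw [tsum_mul_left, expPP_exp_tsum]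

/-- In the exponential pseudo-Poisson model, with conditional rate
`λ₂(i) = δ + β(1 − ν^i)`, the covariance equals `α β (1 − ν) e^{α(ν−1)}`. -/
theorem expPseudoPoisson_cov (α β δ ν : ℝ) (hα : 0 < α) (hν0 : 0 < ν) (hν1 : ν < 1) :
    (∑' i : ℕ, (i : ℝ) * (δ + β * (1 - ν ^ i)) *
        (Real.exp (-α) * α ^ i / (Nat.factorial i))) -
      α * (∑' i : ℕ, (δ + β * (1 - ν ^ i)) *
        (Real.exp (-α) * α ^ i / (Nat.factorial i))) =
      α * β * (1 - ν) * Real.exp (α * (ν - 1)) := by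
  have key : ∀ i : ℕ, ν ^ i * α ^ i = (α * ν) ^ i := fun i => by rw [mul_pow]; ring
  have h1 : (∑' i : ℕ, (i : ℝ) * (δ + β * (1 - ν ^ i)) *
        (Real.exp (-α) * α ^ i / (Nat.factorial i)))
      = Real.exp (-α) * ((δ + β) * (α * Real.exp α) - β * ((α * ν) * Real.exp (α * ν))) := by
    have hc : ∀ i : ℕ, (i : ℝ) * (δ + β * (1 - ν ^ i)) *
        (Real.exp (-α) * α ^ i / (Nat.factorial i))
        = Real.exp (-α) * ((δ + β) * ((i : ℝ) * α ^ i / Nat.factorial i)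
          - β * ((i : ℝ) * (α * ν) ^ i / Nat.factorial i)) := by
      intro i
      rw [← key i]
      field_simp
      ring
    rw [tsum_congr hc, tsum_mul_left]
    congr 1
    rw [Summable.tsum_sub (((expPP_summable' α).mul_left _)) ((expPP_summable' (α * ν)).mul_left _),
      tsum_mul_left, tsum_mul_left, expPP_exp_tsum', expPP_exp_tsum']
  have h2 : (∑' i : ℕ, (δ + β * (1 - ν ^ i)) *
        (Real.exp (-α) * α ^ i / (Nat.factorial i)))
      = Real.exp (-α) * ((δ + β) * Real.exp α - β * Real.exp (α * ν)) := by
    have hc : ∀ i : ℕ, (δ + β * (1 - ν ^ i)) *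
        (Real.exp (-α) * α ^ i / (Nat.factorial i))
        = Real.exp (-α) * ((δ + β) * (α ^ i / Nat.factorial i)
          - β * ((α * ν) ^ i / Nat.factorial i)) := by
      intro i
      rw [← key i]
      field_simp
      ring
    rw [tsum_congr hc, tsum_mul_left]
    congr 1
    rw [Summable.tsum_sub (((expPP_summable α).mul_left _)) ((expPP_summable (α * ν)).mul_left _),
      tsum_mul_left, tsum_mul_left, expPP_exp_tsum, expPP_exp_tsum]
  rw [h1, h2]
  have e1 : Real.exp (-α) * Real.exp α = 1 := by
    rw [← Real.exp_add]; simp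
  have e2 : Real.exp (-α) * Real.exp (α * ν) = Real.exp (α * (ν - 1)) := by
    rw [← Real.exp_add]; ring_nf
  linear_combination (α * β * (1 - ν)) * e2
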